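/- For every finite string W over {A, X, B}, the following identities hold among open values in the tight puzzle, where concatenation is denoted by juxtaposition: (1) |AAAW| + t|W| = 0; (2) |AAXW| − t|W| = 0; (3) |AXXW| + t|W| = 0; (4) |AXAW| − t|AW| − 2t|W| = 0; (5) |ABAW| + t|AW| + t|W| = 0. -/

import Mathlib

/-!
The "tight puzzle" of Schwartz–Tabachnikov.  Strings over the alphabet `{A, X, B}`;
word list (coefficient, weight): `X (1,0)`, `XA (1,1)`, `XAA (1,1)`, `AXA (2,1)`,
`AAA (-1,1)`, `BA (-1,1)`, `ABA (-1,1)`, `XXA (-1,1)`; in a parsing the word `X` may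
never be immediately followed by the word `XA` or the word `BA`.
-/

open scoped Classical

/-- The three-letter alphabet. -/
inductive PLetter | A | X | B
deriving DecidableEq

/-- Strings over the alphabet. -/
abbrev PWord := List PLetter

/-- The tight puzzle word list. -/
def tightWords : List PWord :=
  [[PLetter.X], [PLetter.X, PLetter.A], [PLetter.X, PLetter.A, PLetter.A],
   [PLetter.A, PLetter.X, PLetter.A], [PLetter.A, PLetter.A, PLetter.A],
   [PLetter.B, PLetter.A], [PLetter.A, PLetter.B, PLetter.A],
   [PLetter.X, PLetter.X, PLetter.A]]

/-- Coefficients of the words of the tight puzzle (`AXA ↦ 2`; `AAA, BA, ABA, XXA ↦ -1`;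
`X, XA, XAA ↦ 1`). -/
def tightCoeff (w : PWord) : ℤ :=
  if w = [PLetter.A, PLetter.X, PLetter.A] then 2
  else if w = [PLetter.A, PLetter.A, PLetter.A] ∨ w = [PLetter.B, PLetter.A] ∨
      w = [PLetter.A, PLetter.B, PLetter.A] ∨ w = [PLetter.X, PLetter.X, PLetter.A] then -1
  else 1

/-- Weights of the words: the word `X` has weight `0`, all other words weight `1`. -/
def wordWt (w : PWord) : ℕ := if w = [PLetter.X] then 0 else 1

/-- The forbidden adjacency: the word `X` immediately followed by `XA` or `BA`. -/
def Bad (u v : PWord) : Prop :=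
  u = [PLetter.X] ∧ (v = [PLetter.X, PLetter.A] ∨ v = [PLetter.B, PLetter.A])

/-- The contribution `coefficient · t^weight ∈ ℤ[t]` of a parsing `L`. -/
noncomputable def parseVal (c : PWord → ℤ) (L : List PWord) : Polynomial ℤ :=
  Polynomial.C ((L.map c).prod) * Polynomial.X ^ ((L.map wordWt).sum)

/-- `L` is a parsing in the tight puzzle: all its words are on the word list and the
forbidden adjacency never occurs. -/
def TightChain (L : List PWord) : Prop :=
  (∀ w ∈ L, w ∈ tightWords) ∧ List.Chain' (fun u v => ¬ Bad u v) L

/-- The *core* of a string: what remains after deleting all leading and trailing `X`s. -/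
def core (s : PWord) : PWord :=
  ((s.dropWhile (· == PLetter.X)).reverse.dropWhile (· == PLetter.X)).reverse

/-- `L` is a parsing of the bi-infinite string `⋯XX·W·XX⋯` (with the infinitely many
padding `X`s parsed as copies of the word `X` and trimmed away): the words of `L`
concatenate to `W` up to padding by `X`s on either side, `L` neither starts nor ends
with the word `X`, and (because of the padding `X`-words on the left) the first word
of `L` is not `XA` or `BA`. -/
def IsOpenParsing (W : PWord) (L : List PWord) : Prop :=
  TightChain L ∧ core L.flatten = core W ∧
  ∀ h : L ≠ [],
    L.head h ≠ [PLetter.X] ∧ L.head h ≠ [PLetter.X, PLetter.A] ∧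
    L.head h ≠ [PLetter.B, PLetter.A] ∧ L.getLast h ≠ [PLetter.X]

/-- `(r, L)` is a parsing of the cyclic string `(W)`: reading the necklace of the
letters of `W` starting at position `r`, the words of `L` concatenate to it, the
forbidden adjacency does not occur (cyclically), and `r < (last word).length`
(so that every parsing of the necklace is counted exactly once). -/
def IsCyclicParsing (W : PWord) (r : ℕ) (L : List PWord) : Prop :=
  TightChain L ∧
  ∃ h : L ≠ [], L.flatten = W.rotate r ∧ r < (L.getLast h).length ∧
    ¬ Bad (L.getLast h) (L.head h)

/-- `L` is a parsing of the locked string `[W]`: the words of `L` concatenate exactly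
to `W`, no padding allowed. -/
def IsLockedParsing (W : PWord) (L : List PWord) : Prop :=
  TightChain L ∧ L.flatten = W

/-- The nine words of both puzzles, as a function (used to enumerate parsings). -/
def wordOf : Fin 9 → PWord :=
  ![[PLetter.X], [PLetter.X, PLetter.A], [PLetter.X, PLetter.A, PLetter.A],
    [PLetter.X, PLetter.B, PLetter.A], [PLetter.A, PLetter.X, PLetter.A],
    [PLetter.A, PLetter.A, PLetter.A], [PLetter.B, PLetter.A],
    [PLetter.A, PLetter.B, PLetter.A], [PLetter.X, PLetter.X, PLetter.A]]

/-- The open value `|W| ∈ ℤ[t]`: the sum of `coefficient · t^weight` over all parsings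
of the bi-infinite string `⋯XX·W·XX⋯` (any such parsing consists of at most
`W.length + 2` words). -/
noncomputable def openVal (W : PWord) : Polynomial ℤ :=
  ∑ k ∈ Finset.range (W.length + 3), ∑ f : Fin k → Fin 9,
    if IsOpenParsing W ((List.ofFn f).map wordOf) then
      parseVal tightCoeff ((List.ofFn f).map wordOf)
    else 0

/-- The cyclic value `|(W)| ∈ ℤ[t]`: the sum of `coefficient · t^weight` over all
parsings of the cyclic string `(W)`. -/
noncomputable def cycVal (W : PWord) : Polynomial ℤ :=
  ∑ r ∈ Finset.range W.length, ∑ k ∈ Finset.range (W.length + 1), ∑ f : Fin k → Fin 9,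
    if IsCyclicParsing W r ((List.ofFn f).map wordOf) then
      parseVal tightCoeff ((List.ofFn f).map wordOf)
    else 0

/-- The locked value `|[W]| ∈ ℤ[t]`: the sum of `coefficient · t^weight` over all
parsings whose concatenation is exactly `W`. -/
noncomputable def lockVal (W : PWord) : Polynomial ℤ :=
  ∑ k ∈ Finset.range (W.length + 1), ∑ f : Fin k → Fin 9,
    if IsLockedParsing W ((List.ofFn f).map wordOf) then
      parseVal tightCoeff ((List.ofFn f).map wordOf)
    else 0


/-! ### Auxiliary machinery for the proof -/

namespace TightAux

open PLetter

/-- Abstract sum over candidate parsings. -/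
noncomputable def S (n : ℕ) (P : List PWord → Prop) : Polynomial ℤ :=
  ∑ k ∈ Finset.range n, ∑ f : Fin k → Fin 9,
    if P ((List.ofFn f).map wordOf) then parseVal tightCoeff ((List.ofFn f).map wordOf) else 0

lemma S_congr {P Q : List PWord → Prop} (h : ∀ L, P L ↔ Q L) (n : ℕ) : S n P = S n Q := by
  unfold S
  refine Finset.sum_congr rfl fun k _ => Finset.sum_congr rfl fun f _ => ?_
  rw [if_congr (h _) rfl rfl]

lemma S_false (n : ℕ) : S n (fun _ => False) = 0 := by simp [S]

lemma parseVal_nil : parseVal tightCoeff [] = 1 := by simp [parseVal]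

lemma parseVal_cons (w : PWord) (L : List PWord) :
    parseVal tightCoeff (w :: L) =
      Polynomial.C (tightCoeff w) * Polynomial.X ^ wordWt w * parseVal tightCoeff L := by
  simp only [parseVal, List.map_cons, List.prod_cons, List.sum_cons, pow_add, map_mul]
  ring

lemma S_succ (n : ℕ) (P : List PWord → Prop) :
    S (n + 1) P = (if P [] then 1 else 0) +
      ∑ i : Fin 9, Polynomial.C (tightCoeff (wordOf i)) * Polynomial.X ^ wordWt (wordOf i) *
        S n (fun L => P (wordOf i :: L)) := by
  unfold S
  rw [Finset.sum_range_succ', add_comm]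
  congr 1
  · simp [List.ofFn_zero, parseVal_nil]
  · calc (∑ k ∈ Finset.range n, ∑ f : Fin (k + 1) → Fin 9,
        if P ((List.ofFn f).map wordOf) then parseVal tightCoeff ((List.ofFn f).map wordOf) else 0)
        = ∑ k ∈ Finset.range n, ∑ i : Fin 9,
            Polynomial.C (tightCoeff (wordOf i)) * Polynomial.X ^ wordWt (wordOf i) *
            ∑ g : Fin k → Fin 9,
              (if P (wordOf i :: (List.ofFn g).map wordOf) then
                parseVal tightCoeff ((List.ofFn g).map wordOf) else 0) := by
          refine Finset.sum_congr rfl fun k _ => ?_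
          rw [← Equiv.sum_comp (Fin.consEquiv fun _ => Fin 9)
            (fun f => if P ((List.ofFn f).map wordOf)
              then parseVal tightCoeff ((List.ofFn f).map wordOf) else 0), Fintype.sum_prod_type]
          refine Finset.sum_congr rfl fun i _ => ?_
          rw [Finset.mul_sum]
          refine Finset.sum_congr rfl fun g _ => ?_
          have hofn : List.ofFn ((Fin.consEquiv fun _ => Fin 9) (i, g)) = i :: List.ofFn g := by
            rw [List.ofFn_succ]
            congr 1
          rw [hofn]
          simp only [List.map_cons, parseVal_cons]
          split <;> simp
        _ = _ := by
          rw [Finset.sum_comm]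
          refine Finset.sum_congr rfl fun i _ => ?_
          rw [Finset.mul_sum]

lemma S_stable {P : List PWord → Prop} {n m : ℕ} (hnm : n ≤ m)
    (hb : ∀ L, P L → L.length < n) : S m P = S n P := by
  unfold S
  rw [← Finset.sum_range_add_sum_Ico _ hnm]
  have hz : (∑ k ∈ Finset.Ico n m, ∑ f : Fin k → Fin 9,
      if P ((List.ofFn f).map wordOf) then parseVal tightCoeff ((List.ofFn f).map wordOf) else 0)
      = 0 := by
    refine Finset.sum_eq_zero fun k hk => Finset.sum_eq_zero fun f _ => ?_
    rw [if_neg]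
    intro hP
    have := hb _ hP
    simp only [List.length_map, List.length_ofFn] at this
    have := (Finset.mem_Ico.1 hk).1
    omega
  rw [hz, add_zero]

/-! ### Locked parsings with a state -/

/-- Locked parsing with a flag recording whether the previous word was `X`. -/
def LockP (s : Bool) (V : PWord) (L : List PWord) : Prop :=
  IsLockedParsing V L ∧ (s = true → ∀ y ∈ L.head?, y ≠ [X, A] ∧ y ≠ [B, A])

lemma lockVal_S (V : PWord) : lockVal V = S (V.length + 1) (LockP false V) := by
  have : lockVal V = S (V.length + 1) (IsLockedParsing V) := rfl
  rw [this]
  exact S_congr (fun L => by simp [LockP]) _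

/-- The locked value in state "just after an `X`". -/
noncomputable def lockValX (V : PWord) : Polynomial ℤ := S (V.length + 1) (LockP true V)

lemma word_ne_nil {w : PWord} (h : w ∈ tightWords) : w ≠ [] := by
  fin_cases h <;> simp

lemma lock_length {V : PWord} {L : List PWord} (h : IsLockedParsing V L) :
    L.length ≤ V.length := by
  obtain ⟨⟨hmem, _⟩, hfl⟩ := h
  have key : ∀ (M : List PWord), (∀ w ∈ M, w ∈ tightWords) → M.length ≤ M.flatten.length := by
    intro M
    induction M with
    | nil => simp
    | cons w M ih =>
      intro h
      have h1 : 1 ≤ w.length := by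
        have hw := h w (by simp)
        have := word_ne_nil hw
        cases w with
        | nil => simp at this
        | cons a t => simp
      have h2 := ih (fun u hu => h u (by simp [hu]))
      simp only [List.flatten_cons, List.length_append, List.length_cons]
      omega
  rw [← hfl]
  exact key L hmem

lemma S_lockP_false (n : ℕ) (U : PWord) (h : U.length < n) :
    S n (LockP false U) = lockVal U := by
  rw [lockVal_S]
  exact S_stable (by omega) (fun L hL => lt_of_le_of_lt (lock_length hL.1) (by omega))

lemma S_lockP_true (n : ℕ) (U : PWord) (h : U.length < n) :
    S n (LockP true U) = lockValX U := by
  unfold lockValX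
  exact S_stable (by omega) (fun L hL => lt_of_le_of_lt (lock_length hL.1) (by omega))

lemma lockP_cons (s : Bool) (V w : PWord) (L : List PWord) :
    LockP s V (w :: L) ↔
      ((w ∈ tightWords ∧ (s = true → w ≠ [X, A] ∧ w ≠ [B, A]) ∧ w <+: V) ∧
        LockP (decide (w = [X])) (V.drop w.length) L) := by
  constructor
  · rintro ⟨⟨⟨hmem, hch⟩, hfl⟩, hs⟩
    rw [List.flatten_cons] at hfl
    have hpre : w <+: V := ⟨L.flatten, hfl⟩
    have hdrop : V.drop w.length = L.flatten := by rw [← hfl, List.drop_left]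
    unfold List.Chain' at hch
    rw [List.isChain_cons] at hch
    refine ⟨⟨hmem w (by simp), fun hs' => by simpa using hs hs' w (by simp), hpre⟩,
      ⟨⟨fun u hu => hmem u (by simp [hu]), hch.2⟩, hdrop.symm⟩, ?_⟩
    intro hdec y hy
    have hw : w = [X] := of_decide_eq_true hdec
    have hb := hch.1 y hy
    rw [hw] at hb
    constructor <;> rintro rfl <;> exact hb ⟨rfl, by simp⟩
  · rintro ⟨⟨hmem, hhead, hpre⟩, ⟨⟨hmemL, hch⟩, hfl⟩, hsX⟩
    obtain ⟨tail, rfl⟩ := hpre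
    have hdrop : (w ++ tail).drop w.length = tail := List.drop_left
    rw [hdrop] at hfl
    refine ⟨⟨⟨?_, ?_⟩, ?_⟩, ?_⟩
    · intro u hu
      rcases List.mem_cons.1 hu with rfl | hu
      · exact hmem
      · exact hmemL u hu
    · unfold List.Chain'
      rw [List.isChain_cons]
      refine ⟨?_, hch⟩
      intro y hy
      rintro ⟨hwX, hy'⟩
      have := hsX (by simp [hwX]) y hy
      tauto
    · rw [List.flatten_cons, hfl]
    · intro hs' y hy
      simp only [List.head?_cons, Option.mem_def, Option.some.injEq] at hy
      subst hy
      exact hhead hs'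

lemma S_branch (n : ℕ) (s : Bool) (w V : PWord) :
    S n (fun L => LockP s V (w :: L)) =
      if w ∈ tightWords ∧ (s = true → w ≠ [X, A] ∧ w ≠ [B, A]) ∧ w <+: V then
        S n (LockP (decide (w = [X])) (V.drop w.length)) else 0 := by
  split_ifs with h
  · exact S_congr (fun L => by rw [lockP_cons]; exact and_iff_right h) n
  · rw [← S_false n]
    refine S_congr (fun L => ?_) n
    simp only [iff_false]
    intro hL
    exact h ((lockP_cons s V w L).1 hL).1

lemma S_zero (P : List PWord → Prop) : S 0 P = 0 := by simp [S]

noncomputable def m1A (Z : PWord) : Polynomial ℤ := if [A] <+: Z then lockVal (Z.drop 1) else 0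
noncomputable def m2AA (Z : PWord) : Polynomial ℤ := if [A, A] <+: Z then lockVal (Z.drop 2) else 0
noncomputable def m2XA (Z : PWord) : Polynomial ℤ := if [X, A] <+: Z then lockVal (Z.drop 2) else 0
noncomputable def m2BA (Z : PWord) : Polynomial ℤ := if [B, A] <+: Z then lockVal (Z.drop 2) else 0
noncomputable def m3AXA (Z : PWord) : Polynomial ℤ := if [A, X, A] <+: Z then lockVal (Z.drop 3) else 0
noncomputable def m3AAA (Z : PWord) : Polynomial ℤ := if [A, A, A] <+: Z then lockVal (Z.drop 3) else 0
noncomputable def m3ABA (Z : PWord) : Polynomial ℤ := if [A, B, A] <+: Z then lockVal (Z.drop 3) else 0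

lemma lockP_nil_iff (s : Bool) (V : PWord) : LockP s V [] ↔ V = [] := by
  simp [LockP, IsLockedParsing, TightChain, eq_comm, List.Chain', List.isChain_nil]

lemma lockVal_nil : lockVal ([] : PWord) = 1 := by
  rw [lockVal_S, S_succ]
  simp [S_zero, lockP_nil_iff]

lemma lockValX_nil : lockValX ([] : PWord) = 1 := by
  unfold lockValX
  rw [S_succ]
  simp [S_zero, lockP_nil_iff]

lemma lockVal_A (Z : PWord) :
    lockVal (A :: Z) = Polynomial.X * (2 * m2XA Z - m2AA Z - m2BA Z) := by
  rw [lockVal_S, S_succ]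
  simp only [Fin.sum_univ_succ, Finset.univ_eq_empty, Finset.sum_empty, wordOf,
    Matrix.cons_val_zero, Matrix.cons_val_succ, S_branch, lockP_nil_iff]
  simp only [tightWords, tightCoeff, wordWt, List.mem_cons, List.cons_prefix_cons,
    List.nil_prefix, List.cons.injEq, List.drop_succ_cons, List.drop_zero, List.length_cons,
    List.length_nil, List.length_cons]
  simp only [List.cons_ne_nil, reduceCtorEq, if_false, if_true, false_and, and_false, and_true,
    true_and, or_false, false_or, decide_eq_true_eq]
  norm_num
  rw [S_lockP_false _ _ (by simp [List.length_drop])]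
  simp only [m2XA, m2AA, m2BA, List.drop_one]
  split_ifs <;> ring

lemma lockValX_A (Z : PWord) : lockValX (A :: Z) = lockVal (A :: Z) := by
  rw [lockVal_A]
  unfold lockValX
  rw [S_succ]
  simp only [Fin.sum_univ_succ, Finset.univ_eq_empty, Finset.sum_empty, wordOf,
    Matrix.cons_val_zero, Matrix.cons_val_succ, S_branch, lockP_nil_iff]
  simp only [tightWords, tightCoeff, wordWt, List.mem_cons, List.cons_prefix_cons,
    List.nil_prefix, List.cons.injEq, List.drop_succ_cons, List.drop_zero, List.length_cons,
    List.length_nil]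
  simp only [List.cons_ne_nil, reduceCtorEq, if_false, if_true, false_and, and_false, and_true,
    true_and, or_false, false_or, decide_eq_true_eq]
  norm_num
  rw [S_lockP_false _ _ (by simp [List.length_drop])]
  simp only [m2XA, m2AA, m2BA, List.drop_one]
  split_ifs <;> ring

lemma lockVal_B (Z : PWord) : lockVal (B :: Z) = -(Polynomial.X * m1A Z) := by
  rw [lockVal_S, S_succ]
  simp only [Fin.sum_univ_succ, Finset.univ_eq_empty, Finset.sum_empty, wordOf,
    Matrix.cons_val_zero, Matrix.cons_val_succ, S_branch, lockP_nil_iff]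
  simp only [tightWords, tightCoeff, wordWt, List.mem_cons, List.cons_prefix_cons,
    List.nil_prefix, List.cons.injEq, List.drop_succ_cons, List.drop_zero, List.length_cons,
    List.length_nil]
  simp only [List.cons_ne_nil, reduceCtorEq, if_false, if_true, false_and, and_false, and_true,
    true_and, or_false, false_or, decide_eq_true_eq]
  norm_num
  rw [S_lockP_false _ _ (by simp [List.length_drop])]
  simp only [m1A, List.drop_one]
  split_ifs <;> ring

lemma lockValX_B (Z : PWord) : lockValX (B :: Z) = 0 := by
  unfold lockValX
  rw [S_succ]
  simp only [Fin.sum_univ_succ, Finset.univ_eq_empty, Finset.sum_empty, wordOf,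
    Matrix.cons_val_zero, Matrix.cons_val_succ, S_branch, lockP_nil_iff]
  simp only [tightWords, tightCoeff, wordWt, List.mem_cons, List.cons_prefix_cons,
    List.nil_prefix, List.cons.injEq, List.drop_succ_cons, List.drop_zero, List.length_cons,
    List.length_nil]
  simp only [List.cons_ne_nil, reduceCtorEq, if_false, if_true, false_and, and_false, and_true,
    true_and, or_false, false_or, decide_eq_true_eq]
  norm_num

lemma lockVal_X (Z : PWord) :
    lockVal (X :: Z) = lockValX Z + Polynomial.X * m1A Z + Polynomial.X * m2AA Z
      - Polynomial.X * m2XA Z := by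
  rw [lockVal_S, S_succ]
  simp only [Fin.sum_univ_succ, Finset.univ_eq_empty, Finset.sum_empty, wordOf,
    Matrix.cons_val_zero, Matrix.cons_val_succ, S_branch, lockP_nil_iff]
  simp only [tightWords, tightCoeff, wordWt, List.mem_cons, List.cons_prefix_cons,
    List.nil_prefix, List.cons.injEq, List.drop_succ_cons, List.drop_zero, List.length_cons,
    List.length_nil]
  simp only [List.cons_ne_nil, reduceCtorEq, if_false, if_true, false_and, and_false, and_true,
    true_and, or_false, false_or, decide_eq_true_eq]
  norm_num
  rw [S_lockP_true _ _ (by omega), S_lockP_false _ _ (by simp [List.length_drop]),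
    S_lockP_false _ _ (by simp [List.length_drop])]
  simp only [m1A, m2AA, m2XA, List.drop_one]
  split_ifs <;> ring

lemma lockValX_X (Z : PWord) :
    lockValX (X :: Z) = lockValX Z + Polynomial.X * m2AA Z - Polynomial.X * m2XA Z := by
  unfold lockValX
  rw [S_succ]
  simp only [Fin.sum_univ_succ, Finset.univ_eq_empty, Finset.sum_empty, wordOf,
    Matrix.cons_val_zero, Matrix.cons_val_succ, S_branch, lockP_nil_iff]
  simp only [tightWords, tightCoeff, wordWt, List.mem_cons, List.cons_prefix_cons,
    List.nil_prefix, List.cons.injEq, List.drop_succ_cons, List.drop_zero, List.length_cons,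
    List.length_nil]
  simp only [List.cons_ne_nil, reduceCtorEq, if_false, if_true, false_and, and_false, and_true,
    true_and, or_false, false_or, decide_eq_true_eq]
  norm_num
  rw [S_lockP_true _ _ (by omega), S_lockP_false _ _ (by simp [List.length_drop])]
  simp only [m2AA, m2XA, List.drop_one]
  split_ifs <;> ring

/-! ### Shift lemmas for the prefix-match helpers -/

lemma m1A_nil : m1A [] = 0 := by simp [m1A]
lemma m1A_A (Z : PWord) : m1A (A :: Z) = lockVal Z := by
  simp [m1A, List.cons_prefix_cons]
lemma m1A_X (Z : PWord) : m1A (X :: Z) = 0 := by simp [m1A, List.cons_prefix_cons]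
lemma m1A_B (Z : PWord) : m1A (B :: Z) = 0 := by simp [m1A, List.cons_prefix_cons]

lemma m2AA_nil : m2AA [] = 0 := by simp [m2AA]
lemma m2AA_A (Z : PWord) : m2AA (A :: Z) = m1A Z := by
  simp [m2AA, m1A, List.cons_prefix_cons, List.drop_one]
lemma m2AA_X (Z : PWord) : m2AA (X :: Z) = 0 := by simp [m2AA, List.cons_prefix_cons]
lemma m2AA_B (Z : PWord) : m2AA (B :: Z) = 0 := by simp [m2AA, List.cons_prefix_cons]

lemma m2XA_nil : m2XA [] = 0 := by simp [m2XA]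
lemma m2XA_A (Z : PWord) : m2XA (A :: Z) = 0 := by simp [m2XA, List.cons_prefix_cons]
lemma m2XA_X (Z : PWord) : m2XA (X :: Z) = m1A Z := by
  simp [m2XA, m1A, List.cons_prefix_cons, List.drop_one]
lemma m2XA_B (Z : PWord) : m2XA (B :: Z) = 0 := by simp [m2XA, List.cons_prefix_cons]

lemma m2BA_nil : m2BA [] = 0 := by simp [m2BA]
lemma m2BA_A (Z : PWord) : m2BA (A :: Z) = 0 := by simp [m2BA, List.cons_prefix_cons]
lemma m2BA_X (Z : PWord) : m2BA (X :: Z) = 0 := by simp [m2BA, List.cons_prefix_cons]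
lemma m2BA_B (Z : PWord) : m2BA (B :: Z) = m1A Z := by
  simp [m2BA, m1A, List.cons_prefix_cons, List.drop_one]

lemma m3AXA_nil : m3AXA [] = 0 := by simp [m3AXA]
lemma m3AXA_A (Z : PWord) : m3AXA (A :: Z) = m2XA Z := by
  simp [m3AXA, m2XA, List.cons_prefix_cons]
lemma m3AXA_X (Z : PWord) : m3AXA (X :: Z) = 0 := by simp [m3AXA, List.cons_prefix_cons]
lemma m3AXA_B (Z : PWord) : m3AXA (B :: Z) = 0 := by simp [m3AXA, List.cons_prefix_cons]

lemma m3AAA_nil : m3AAA [] = 0 := by simp [m3AAA]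
lemma m3AAA_A (Z : PWord) : m3AAA (A :: Z) = m2AA Z := by
  simp [m3AAA, m2AA, List.cons_prefix_cons]
lemma m3AAA_X (Z : PWord) : m3AAA (X :: Z) = 0 := by simp [m3AAA, List.cons_prefix_cons]
lemma m3AAA_B (Z : PWord) : m3AAA (B :: Z) = 0 := by simp [m3AAA, List.cons_prefix_cons]

lemma m3ABA_nil : m3ABA [] = 0 := by simp [m3ABA]
lemma m3ABA_A (Z : PWord) : m3ABA (A :: Z) = m2BA Z := by
  simp [m3ABA, m2BA, List.cons_prefix_cons]
lemma m3ABA_X (Z : PWord) : m3ABA (X :: Z) = 0 := by simp [m3ABA, List.cons_prefix_cons]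
lemma m3ABA_B (Z : PWord) : m3ABA (B :: Z) = 0 := by simp [m3ABA, List.cons_prefix_cons]

/-- The value of an open string in terms of its core. -/
noncomputable def Phi (U : PWord) : Polynomial ℤ :=
  (if U = [] then 1 else 0)
    + Polynomial.X * (m2AA U + 2 * m3AXA U - m3AAA U - m3ABA U - m1A U)

/-! ### The two key identities -/

lemma claimB (Z : PWord) :
    Polynomial.X * m1A Z - Polynomial.X * m2AA Z + Polynomial.X * m2XA Z
      - lockValX Z + Phi (Z.dropWhile (· == X)) = 0 := by
  induction Z with
  | nil =>
    simp [m1A_nil, m2AA_nil, m2XA_nil, lockValX_nil, Phi, m3AXA_nil, m3AAA_nil, m3ABA_nil]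
  | cons a Z ih =>
    cases a with
    | A =>
      rw [show List.dropWhile (· == X) (A :: Z) = A :: Z by simp [List.dropWhile_cons]]
      simp only [Phi, m1A_A, m2AA_A, m2XA_A, m3AXA_A, m3AAA_A, m3ABA_A, lockValX_A, lockVal_A,
        List.cons_ne_nil, if_false, reduceCtorEq]
      ring
    | B =>
      rw [show List.dropWhile (· == X) (B :: Z) = B :: Z by simp [List.dropWhile_cons]]
      simp only [Phi, m1A_B, m2AA_B, m2XA_B, m3AXA_B, m3AAA_B, m3ABA_B, lockValX_B,
        List.cons_ne_nil, if_false, reduceCtorEq]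
      ring
    | X =>
      rw [show List.dropWhile (· == X) (X :: Z) = List.dropWhile (· == X) Z by
        simp [List.dropWhile_cons]]
      rw [m1A_X, m2AA_X, m2XA_X, lockValX_X]
      linear_combination ih

lemma claimA (Z : PWord) :
    lockVal (A :: Z) + Polynomial.X * m1A Z - lockVal Z + Phi (Z.dropWhile (· == X)) = 0 := by
  cases Z with
  | nil =>
    simp [lockVal_A, m1A_nil, m2AA_nil, m2XA_nil, m2BA_nil, lockVal_nil, Phi,
      m3AXA_nil, m3AAA_nil, m3ABA_nil]
  | cons a Z =>
    cases a with
    | A =>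
      rw [show List.dropWhile (· == X) (A :: Z) = A :: Z by simp [List.dropWhile_cons]]
      simp only [Phi, lockVal_A, m1A_A, m2AA_A, m2XA_A, m2BA_A, m3AXA_A, m3AAA_A, m3ABA_A,
        List.cons_ne_nil, if_false, reduceCtorEq]
      ring
    | B =>
      rw [show List.dropWhile (· == X) (B :: Z) = B :: Z by simp [List.dropWhile_cons]]
      simp only [Phi, lockVal_A, lockVal_B, m1A_B, m2AA_B, m2XA_B, m2BA_B, m3AXA_B, m3AAA_B,
        m3ABA_B, List.cons_ne_nil, if_false, reduceCtorEq]
      ring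
    | X =>
      rw [show List.dropWhile (· == X) (X :: Z) = List.dropWhile (· == X) Z by
        simp [List.dropWhile_cons]]
      rw [lockVal_A, lockVal_X, m1A_X, m2AA_X, m2XA_X, m2BA_X]
      linear_combination claimB Z

/-! ### The open value via the core -/

lemma isOpen_cons (W w : PWord) (L : List PWord) :
    IsOpenParsing W (w :: L) ↔
      ((w ∈ tightWords ∧ w ≠ [X] ∧ w ≠ [X, A] ∧ w ≠ [B, A]) ∧
       TightChain L ∧ core (w ++ L.flatten) = core W ∧ ∀ y ∈ L.getLast?, y ≠ [X]) := by
  constructor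
  · rintro ⟨⟨hmem, hch⟩, hcore, hcond⟩
    obtain ⟨h1, h2, h3, h4⟩ := hcond (List.cons_ne_nil w L)
    rw [List.head_cons] at h1 h2 h3
    refine ⟨⟨hmem w (by simp), h1, h2, h3⟩,
      ⟨fun u hu => hmem u (by simp [hu]), (List.isChain_cons.1 hch).2⟩,
      by simpa [List.flatten_cons] using hcore, ?_⟩
    intro y hy
    cases L with
    | nil => simp at hy
    | cons v M =>
      have hne : (v :: M : List PWord) ≠ [] := List.cons_ne_nil _ _
      rw [List.getLast?_eq_getLast hne, Option.mem_def, Option.some.injEq] at hy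
      subst hy
      rw [List.getLast_cons hne] at h4
      exact h4
  · rintro ⟨⟨hmem, h1, h2, h3⟩, ⟨hmemL, hch⟩, hcore, hlast⟩
    refine ⟨⟨?_, List.isChain_cons.2 ⟨?_, hch⟩⟩, by simpa [List.flatten_cons] using hcore, ?_⟩
    · intro u hu
      rcases List.mem_cons.1 hu with rfl | hu
      · exact hmem
      · exact hmemL u hu
    · intro y _
      rintro ⟨hwX, _⟩
      exact h1 hwX
    · intro _
      rw [List.head_cons]
      refine ⟨h1, h2, h3, ?_⟩
      cases L with
      | nil => simpa using h1
      | cons v M =>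
        have hne : (v :: M : List PWord) ≠ [] := List.cons_ne_nil _ _
        rw [List.getLast_cons hne]
        exact hlast _ (by rw [List.getLast?_eq_getLast hne]; rfl)

lemma isOpen_nil (W : PWord) : IsOpenParsing W [] ↔ core W = [] := by
  constructor
  · rintro ⟨_, hcore, _⟩
    rw [← hcore]
    rfl
  · intro h
    exact ⟨⟨by simp, List.isChain_nil⟩, by rw [h]; rfl, fun hne => absurd rfl hne⟩

lemma word_getLast {w : PWord} (hw : w ∈ tightWords) (hx : w ≠ [X]) :
    w.getLast? = some A := by
  fin_cases hw <;> first | (exact absurd rfl hx) | rfl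

lemma flatten_getLast_of (L : List PWord) (g : PWord) (hg : L.getLast? = some g)
    (hne : g ≠ []) : L.flatten.getLast? = g.getLast? := by
  induction L with
  | nil => simp at hg
  | cons w L ih =>
    cases L with
    | nil =>
      simp only [List.getLast?_singleton, Option.some.injEq] at hg
      subst hg
      simp
    | cons v M =>
      rw [List.getLast?_cons_cons] at hg
      rw [List.flatten_cons, List.getLast?_append, ih hg, List.getLast?_eq_getLast hne,
        Option.some_or]

lemma flatten_getLast (L : List PWord) (hL : L ≠ []) (hmem : ∀ u ∈ L, u ∈ tightWords)
    (hlast : ∀ y ∈ L.getLast?, y ≠ [X]) : L.flatten.getLast? = some A := by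
  have hg : L.getLast? = some (L.getLast hL) := List.getLast?_eq_getLast hL
  have hmg : L.getLast hL ∈ tightWords := hmem _ (List.getLast_mem hL)
  have hxg : L.getLast hL ≠ [X] := hlast _ (by rw [hg]; rfl)
  rw [flatten_getLast_of L _ hg (word_ne_nil hmg)]
  exact word_getLast hmg hxg

/-! ### Core computations -/

lemma dropWhile_headA {m : PWord} (h : m.head? = some A) : m.dropWhile (· == X) = m := by
  cases m with
  | nil => simp at h
  | cons a t =>
    simp only [List.head?_cons, Option.some.injEq] at h
    subst h
    simp [List.dropWhile_cons]

lemma core_cons_X (s : PWord) : core (X :: s) = core s := by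
  unfold core
  rw [show List.dropWhile (· == X) (X :: s) = List.dropWhile (· == X) s by
    simp [List.dropWhile_cons]]

lemma core_A {m : PWord} (h1 : m.head? = some A) (h2 : m.getLast? = some A) : core m = m := by
  unfold core
  rw [dropWhile_headA h1, dropWhile_headA (by rw [List.head?_reverse]; exact h2),
    List.reverse_reverse]

lemma goodF_last (σ F : PWord) (hσ : σ.getLast? = some A)
    (hF : F = [] ∨ F.getLast? = some A) : (σ ++ F).getLast? = some A := by
  rw [List.getLast?_append]
  rcases hF with rfl | hF
  · simpa using hσ
  · rw [hF, Option.some_or]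

lemma core_XAA (F : PWord) (hF : F = [] ∨ F.getLast? = some A) :
    core ([X, A, A] ++ F) = [A, A] ++ F := by
  show core (X :: ([A, A] ++ F)) = _
  rw [core_cons_X]
  exact core_A (by simp) (goodF_last [A, A] F rfl hF)

lemma core_XXA (F : PWord) (hF : F = [] ∨ F.getLast? = some A) :
    core ([X, X, A] ++ F) = [A] ++ F := by
  show core (X :: (X :: ([A] ++ F))) = _
  rw [core_cons_X, core_cons_X]
  exact core_A (by simp) (goodF_last [A] F rfl hF)

lemma core_AXA (F : PWord) (hF : F = [] ∨ F.getLast? = some A) :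
    core ([A, X, A] ++ F) = [A, X, A] ++ F :=
  core_A (by simp) (goodF_last [A, X, A] F rfl hF)

lemma core_AAA (F : PWord) (hF : F = [] ∨ F.getLast? = some A) :
    core ([A, A, A] ++ F) = [A, A, A] ++ F :=
  core_A (by simp) (goodF_last [A, A, A] F rfl hF)

lemma core_ABA (F : PWord) (hF : F = [] ∨ F.getLast? = some A) :
    core ([A, B, A] ++ F) = [A, B, A] ++ F :=
  core_A (by simp) (goodF_last [A, B, A] F rfl hF)

/-! ### Open branch lemma -/

/-- Locked parsing not ending with the word `X`. -/
def LockE (V : PWord) (L : List PWord) : Prop :=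
  IsLockedParsing V L ∧ ∀ y ∈ L.getLast?, y ≠ [X]

lemma lockE_iff (U : PWord) (hU : ∀ y ∈ U.getLast?, y ≠ X) (L : List PWord) :
    LockE U L ↔ LockP false U L := by
  constructor
  · rintro ⟨h, _⟩
    exact ⟨h, by simp⟩
  · rintro ⟨⟨⟨hmem, hch⟩, hfl⟩, -⟩
    refine ⟨⟨⟨hmem, hch⟩, hfl⟩, ?_⟩
    intro y hy
    rintro rfl
    have : L.flatten.getLast? = some X :=
      flatten_getLast_of L [X] hy (by simp)
    rw [hfl] at this
    exact hU X this rfl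

lemma S_open_branch (n : ℕ) (W w σ : PWord)
    (hw : w ∈ tightWords) (h1 : w ≠ [X]) (h2 : w ≠ [X, A]) (h3 : w ≠ [B, A])
    (hσ : ∀ F : PWord, F = [] ∨ F.getLast? = some A → core (w ++ F) = σ ++ F) :
    S n (fun L => IsOpenParsing W (w :: L)) =
      if σ <+: core W then S n (LockE ((core W).drop σ.length)) else 0 := by
  have good : ∀ L : List PWord, TightChain L → (∀ y ∈ L.getLast?, y ≠ [X]) →
      L.flatten = [] ∨ L.flatten.getLast? = some A := by
    intro L hTC hlast
    rcases eq_or_ne L [] with rfl | hne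
    · left; rfl
    · right; exact flatten_getLast L hne hTC.1 hlast
  split_ifs with hpre
  · refine S_congr (fun L => ?_) n
    rw [isOpen_cons]
    constructor
    · rintro ⟨-, hTC, hcore, hlast⟩
      rw [hσ _ (good L hTC hlast)] at hcore
      have hdrop : (core W).drop σ.length = L.flatten := by rw [← hcore, List.drop_left]
      exact ⟨⟨hTC, hdrop.symm⟩, hlast⟩
    · rintro ⟨⟨hTC, hfl⟩, hlast⟩
      refine ⟨⟨hw, h1, h2, h3⟩, hTC, ?_, hlast⟩
      rw [hσ _ (good L hTC hlast), hfl]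
      obtain ⟨tail, ht⟩ := hpre
      conv_rhs => rw [← ht]
      rw [← ht, List.drop_left]
  · rw [← S_false n]
    refine S_congr (fun L => ?_) n
    simp only [iff_false]
    intro hO
    obtain ⟨-, hTC, hcore, hlast⟩ := (isOpen_cons W w L).1 hO
    rw [hσ _ (good L hTC hlast)] at hcore
    exact hpre ⟨_, hcore⟩

lemma head?_dropWhile {α : Type*} (p : α → Bool) (l : List α) :
    ∀ y ∈ (l.dropWhile p).head?, p y = false := by
  induction l with
  | nil => simp
  | cons a t ih =>
    rw [List.dropWhile_cons]
    split_ifs with h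
    · exact ih
    · intro y hy
      simp only [List.head?_cons, Option.mem_def, Option.some.injEq] at hy
      subst hy
      simpa using h

lemma core_last (Wc : PWord) : ∀ y ∈ (core Wc).getLast?, y ≠ X := by
  intro y hy
  unfold core at hy
  rw [List.getLast?_reverse] at hy
  have := head?_dropWhile _ _ y hy
  simpa using this

lemma drop_last {U : PWord} (k : ℕ) (h : ∀ y ∈ U.getLast?, y ≠ X) :
    ∀ y ∈ (U.drop k).getLast?, y ≠ X := by
  intro y hy
  obtain ⟨s, hs⟩ := List.drop_suffix k U
  apply h
  rw [← hs, List.getLast?_append, Option.mem_def.1 hy, Option.some_or]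
  rfl

lemma S_LockE (n : ℕ) (U : PWord) (hU : ∀ y ∈ U.getLast?, y ≠ X) (h : U.length < n) :
    S n (LockE U) = lockVal U := by
  rw [S_congr (lockE_iff U hU) n]
  exact S_lockP_false n U h

lemma core_length (Wc : PWord) : (core Wc).length ≤ Wc.length := by
  unfold core
  calc ((Wc.dropWhile (· == X)).reverse.dropWhile (· == X)).reverse.length
      ≤ (Wc.dropWhile (· == X)).reverse.length := by
        rw [List.length_reverse]
        exact (List.dropWhile_suffix _).length_le
    _ ≤ Wc.length := by
        rw [List.length_reverse]
        exact (List.dropWhile_suffix _).length_le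

lemma S_open_dead (n : ℕ) (W w : PWord)
    (h : ¬(w ∈ tightWords ∧ w ≠ [X] ∧ w ≠ [X, A] ∧ w ≠ [B, A])) :
    S n (fun L => IsOpenParsing W (w :: L)) = 0 := by
  rw [← S_false n]
  refine S_congr (fun L => ?_) n
  simp only [iff_false]
  intro hO
  exact h ((isOpen_cons W w L).1 hO).1

set_option maxHeartbeats 1000000 in
lemma openVal_eq (W : PWord) : openVal W = Phi (core W) := by
  have hc := core_length W
  have hlast := core_last W
  have h0 : openVal W = S (W.length + 2 + 1) (IsOpenParsing W) := rfl
  rw [h0, S_succ]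
  simp only [Fin.sum_univ_succ, Finset.univ_eq_empty, Finset.sum_empty, wordOf,
    Matrix.cons_val_zero, Matrix.cons_val_succ]
  rw [if_congr (isOpen_nil W) rfl rfl]
  rw [S_open_dead _ W [X] (by decide), S_open_dead _ W [X, A] (by decide),
    S_open_dead _ W [X, B, A] (by decide), S_open_dead _ W [B, A] (by decide)]
  rw [S_open_branch _ W [X, A, A] [A, A] (by decide) (by decide) (by decide) (by decide) core_XAA,
    S_open_branch _ W [A, X, A] [A, X, A] (by decide) (by decide) (by decide) (by decide) core_AXA,
    S_open_branch _ W [A, A, A] [A, A, A] (by decide) (by decide) (by decide) (by decide) core_AAA,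
    S_open_branch _ W [A, B, A] [A, B, A] (by decide) (by decide) (by decide) (by decide) core_ABA,
    S_open_branch _ W [X, X, A] [A] (by decide) (by decide) (by decide) (by decide) core_XXA]
  simp only [List.length_cons, List.length_nil, Nat.zero_add, Nat.reduceAdd]
  have e1 : (if [A, A] <+: core W then S (W.length + 2) (LockE ((core W).drop 2)) else 0)
      = m2AA (core W) := by
    unfold m2AA
    by_cases h : [A, A] <+: core W
    · rw [if_pos h, if_pos h, S_LockE _ _ (drop_last _ hlast) (by simp [List.length_drop]; omega)]
    · rw [if_neg h, if_neg h]
  have e2 : (if [A, X, A] <+: core W then S (W.length + 2) (LockE ((core W).drop 3)) else 0)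
      = m3AXA (core W) := by
    unfold m3AXA
    by_cases h : [A, X, A] <+: core W
    · rw [if_pos h, if_pos h, S_LockE _ _ (drop_last _ hlast) (by simp [List.length_drop]; omega)]
    · rw [if_neg h, if_neg h]
  have e3 : (if [A, A, A] <+: core W then S (W.length + 2) (LockE ((core W).drop 3)) else 0)
      = m3AAA (core W) := by
    unfold m3AAA
    by_cases h : [A, A, A] <+: core W
    · rw [if_pos h, if_pos h, S_LockE _ _ (drop_last _ hlast) (by simp [List.length_drop]; omega)]
    · rw [if_neg h, if_neg h]
  have e4 : (if [A, B, A] <+: core W then S (W.length + 2) (LockE ((core W).drop 3)) else 0)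
      = m3ABA (core W) := by
    unfold m3ABA
    by_cases h : [A, B, A] <+: core W
    · rw [if_pos h, if_pos h, S_LockE _ _ (drop_last _ hlast) (by simp [List.length_drop]; omega)]
    · rw [if_neg h, if_neg h]
  have e5 : (if [A] <+: core W then S (W.length + 2) (LockE ((core W).drop 1)) else 0)
      = m1A (core W) := by
    unfold m1A
    by_cases h : [A] <+: core W
    · rw [if_pos h, if_pos h, S_LockE _ _ (drop_last _ hlast) (by simp [List.length_drop]; omega)]
    · rw [if_neg h, if_neg h]
  rw [e1, e2, e3, e4, e5]
  simp only [tightCoeff, wordWt]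
  norm_num
  simp only [reduceCtorEq, reduceIte, List.cons_ne_nil, false_and, and_false, false_or,
    or_false, or_self, if_false, if_true]
  simp only [Phi]
  ring

/-! ### Right strip -/

/-- Strip trailing `X`s. -/
def rs (s : PWord) : PWord := (s.reverse.dropWhile (· == X)).reverse

lemma rs_A (s : PWord) : rs (A :: s) = A :: rs s := by
  unfold rs
  rw [List.reverse_cons, List.dropWhile_append]
  split_ifs with h
  · rw [List.isEmpty_iff] at h
    rw [h]
    simp [List.dropWhile_cons]
  · simp

lemma rs_B (s : PWord) : rs (B :: s) = B :: rs s := by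
  unfold rs
  rw [List.reverse_cons, List.dropWhile_append]
  split_ifs with h
  · rw [List.isEmpty_iff] at h
    rw [h]
    simp [List.dropWhile_cons]
  · simp

lemma rs_X (s : PWord) : rs (X :: s) = if rs s = [] then [] else X :: rs s := by
  unfold rs
  rw [List.reverse_cons, List.dropWhile_append]
  by_cases h : s.reverse.dropWhile (· == X) = []
  · rw [if_pos (by simp [h]), if_pos (by simp [h])]
    simp [List.dropWhile_cons]
  · rw [if_neg (by simpa using h), if_neg (by simpa using h)]
    simp

lemma core_eq_rs_A (s : PWord) : core (A :: s) = A :: rs s := by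
  unfold core
  rw [show List.dropWhile (· == X) (A :: s) = A :: s by simp [List.dropWhile_cons]]
  exact rs_A s

lemma core_eq_rs_B (s : PWord) : core (B :: s) = B :: rs s := by
  unfold core
  rw [show List.dropWhile (· == X) (B :: s) = B :: s by simp [List.dropWhile_cons]]
  exact rs_B s

lemma core_eq (s : PWord) : core s = (rs s).dropWhile (· == X) := by
  induction s with
  | nil => rfl
  | cons a s ih =>
    cases a with
    | A => rw [core_eq_rs_A, rs_A]; simp [List.dropWhile_cons]
    | B => rw [core_eq_rs_B, rs_B]; simp [List.dropWhile_cons]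
    | X =>
      rw [core_cons_X, ih, rs_X]
      by_cases h : rs s = []
      · rw [if_pos h, h]
      · rw [if_neg h]
        simp [List.dropWhile_cons]

/-! ### The main computation -/

lemma Phi_nil : Phi [] = 1 := by
  simp [Phi, m1A_nil, m2AA_nil, m3AXA_nil, m3AAA_nil, m3ABA_nil]

lemma main (W : PWord) :
    openVal ([A, A, A] ++ W) + Polynomial.X * openVal W = 0 ∧
    openVal ([A, A, X] ++ W) - Polynomial.X * openVal W = 0 ∧
    openVal ([A, X, X] ++ W) + Polynomial.X * openVal W = 0 ∧
    openVal ([A, X, A] ++ W) - Polynomial.X * openVal ([A] ++ W)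
      - 2 * Polynomial.X * openVal W = 0 ∧
    openVal ([A, B, A] ++ W) + Polynomial.X * openVal ([A] ++ W)
      + Polynomial.X * openVal W = 0 := by
  set Z : PWord := rs W with hZ
  have hA := claimA Z
  rw [lockVal_A] at hA
  have hB := claimB Z
  have c0 : core W = Z.dropWhile (· == X) := core_eq W
  have cA : core ([A] ++ W) = A :: Z := core_eq_rs_A W
  have cAAA : core ([A, A, A] ++ W) = A :: A :: A :: Z := by
    show core (A :: (A :: A :: W)) = _
    rw [core_eq_rs_A, rs_A, rs_A]
  have cAXA : core ([A, X, A] ++ W) = A :: X :: A :: Z := by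
    show core (A :: (X :: A :: W)) = _
    rw [core_eq_rs_A, rs_X, rs_A, if_neg (by simp)]
  have cABA : core ([A, B, A] ++ W) = A :: B :: A :: Z := by
    show core (A :: (B :: A :: W)) = _
    rw [core_eq_rs_A, rs_B, rs_A]
  have hP1 : Phi (A :: A :: A :: Z) = Polynomial.X *
      (Polynomial.X * (2 * m2XA Z - m2AA Z - m2BA Z) - lockVal Z + Polynomial.X * m1A Z) := by
    simp only [Phi, m2AA_A, m1A_A, m3AXA_A, m3AAA_A, m3ABA_A, m2XA_A, m2BA_A, lockVal_A,
      reduceCtorEq, if_false]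
    ring
  have hPA : Phi (A :: Z) = Polynomial.X *
      (m1A Z + 2 * m2XA Z - m2AA Z - m2BA Z - lockVal Z) := by
    simp only [Phi, m2AA_A, m1A_A, m3AXA_A, m3AAA_A, m3ABA_A, reduceCtorEq, if_false]
    ring
  have hP4 : Phi (A :: X :: A :: Z) = Polynomial.X *
      (2 * lockVal Z - (Polynomial.X * (2 * m2XA Z - m2AA Z - m2BA Z)
        + Polynomial.X * lockVal Z + Polynomial.X * m1A Z)) := by
    simp only [Phi, m2AA_A, m1A_A, m1A_X, m3AXA_A, m3AAA_A, m3ABA_A, m2XA_A, m2XA_X, m2AA_X,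
      m2BA_X, lockVal_X, lockValX_A, lockVal_A, m2BA_A, reduceCtorEq, if_false]
    ring
  have hP5 : Phi (A :: B :: A :: Z) = Polynomial.X *
      (-lockVal Z + Polynomial.X * lockVal Z) := by
    simp only [Phi, m2AA_A, m1A_A, m1A_B, m3AXA_A, m3AAA_A, m3ABA_A, m2XA_B, m2AA_B, m2BA_B,
      m2BA_A, lockVal_B, reduceCtorEq, if_false]
    ring
  refine ⟨?_, ?_, ?_, ?_, ?_⟩
  · rw [openVal_eq, openVal_eq, cAAA, c0, hP1]
    linear_combination Polynomial.X * hA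
  · by_cases hz : Z = []
    · have c2 : core ([A, A, X] ++ W) = [A, A] := by
        show core (A :: (A :: X :: W)) = _
        rw [core_eq_rs_A, rs_A, rs_X, if_pos hz]
      have PhiAA : Phi [A, A] = Polynomial.X := by
        simp [Phi, m2AA_A, m1A_A, m1A_nil, m2XA_A, m2BA_A, m3AXA_A, m3AAA_A, m3ABA_A,
          m2AA_nil, m2XA_nil, m2BA_nil, lockVal_nil, lockVal_A]
      rw [openVal_eq, openVal_eq, c2, c0, hz, PhiAA]
      simp [Phi_nil]
    · have c2 : core ([A, A, X] ++ W) = A :: A :: X :: Z := by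
        show core (A :: (A :: X :: W)) = _
        rw [core_eq_rs_A, rs_A, rs_X, if_neg hz]
      have hP2 : Phi (A :: A :: X :: Z) = Polynomial.X *
          (lockValX Z - Polynomial.X * m1A Z + Polynomial.X * m2AA Z
            - Polynomial.X * m2XA Z) := by
        simp only [Phi, m2AA_A, m1A_A, m1A_X, m3AXA_A, m3AAA_A, m3ABA_A, m2XA_A, m2XA_X,
          m2AA_X, m2BA_X, lockVal_X, lockVal_A, m2BA_A, reduceCtorEq, if_false]
        ring
      rw [openVal_eq, openVal_eq, c2, c0, hP2]
      linear_combination (-Polynomial.X) * hB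
  · by_cases hz : Z = []
    · have c3 : core ([A, X, X] ++ W) = [A] := by
        show core (A :: (X :: X :: W)) = _
        rw [core_eq_rs_A, rs_X, rs_X, if_pos hz, if_pos rfl]
      have PhiA : Phi [A] = -Polynomial.X := by
        simp [Phi, m2AA_A, m1A_A, m1A_nil, m2XA_nil, m2BA_nil, m2AA_nil, m3AXA_A, m3AAA_A,
          m3ABA_A, m2XA_A, m2BA_A, lockVal_nil]
      rw [openVal_eq, openVal_eq, c3, c0, hz, PhiA]
      simp [Phi_nil]
    · have c3 : core ([A, X, X] ++ W) = A :: X :: X :: Z := by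
        show core (A :: (X :: X :: W)) = _
        rw [core_eq_rs_A, rs_X, rs_X, if_neg hz, if_neg (by simp)]
      have hP3 : Phi (A :: X :: X :: Z) = -(Polynomial.X *
          (lockValX Z + Polynomial.X * m2AA Z - Polynomial.X * m2XA Z
            - Polynomial.X * m1A Z)) := by
        simp only [Phi, m2AA_A, m1A_A, m1A_X, m3AXA_A, m3AAA_A, m3ABA_A, m2XA_A, m2XA_X,
          m2AA_X, m2BA_X, lockVal_X, lockValX_X, reduceCtorEq, if_false]
        ring
      rw [openVal_eq, openVal_eq, c3, c0, hP3]
      linear_combination Polynomial.X * hB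
  · rw [openVal_eq, openVal_eq, openVal_eq, cAXA, cA, c0, hP4, hPA]
    linear_combination (-2 * Polynomial.X) * hA
  · rw [openVal_eq, openVal_eq, openVal_eq, cABA, cA, c0, hP5, hPA]
    linear_combination Polynomial.X * hA

end TightAux

open PLetter in
/-- **Left identities** for open values in the tight puzzle. -/
theorem left_identities (W : PWord) :
    openVal ([A, A, A] ++ W) + Polynomial.X * openVal W = 0 ∧
    openVal ([A, A, X] ++ W) - Polynomial.X * openVal W = 0 ∧
    openVal ([A, X, X] ++ W) + Polynomial.X * openVal W = 0 ∧
    openVal ([A, X, A] ++ W) - Polynomial.X * openVal ([A] ++ W)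
      - 2 * Polynomial.X * openVal W = 0 ∧
    openVal ([A, B, A] ++ W) + Polynomial.X * openVal ([A] ++ W)
      + Polynomial.X * openVal W = 0 := by
  exact TightAux.main W
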